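/- For every δ ∈ [-1/4, 1/4] and every n ∈ ℤ, |σ(n+δ) - n| ≤ (0.4π - 1)·|δ|, where σ(x) = x - 0.2·sin(2πx), and 0 < 0.4π - 1 < 1. -/
import Mathlib

noncomputable def sigmaFn (x : ℝ) : ℝ := x - 0.2 * Real.sin (2 * Real.pi * x)

lemma aux_bound {δ : ℝ} (h0 : 0 ≤ δ) (h1 : δ ≤ 1/4) :
    |δ - 0.2 * Real.sin (2 * Real.pi * δ)| ≤ (0.4 * Real.pi - 1) * δ := by
  have hpi3 := Real.pi_gt_three
  have hpi0 := Real.pi_pos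
  have hs_lo : 2 / Real.pi * (2 * Real.pi * δ) ≤ Real.sin (2 * Real.pi * δ) :=
    Real.mul_le_sin (by positivity) (by nlinarith)
  have hs4 : 4 * δ ≤ Real.sin (2 * Real.pi * δ) := by
    have : 2 / Real.pi * (2 * Real.pi * δ) = 4 * δ := by field_simp; ring
    linarith [hs_lo, this ▸ hs_lo]
  have hs_hi : Real.sin (2 * Real.pi * δ) ≤ 2 * Real.pi * δ :=
    Real.sin_le (by positivity)
  rw [abs_le]
  constructor <;> nlinarith

theorem stmt_3 :
    (0 < 0.4 * Real.pi - 1) ∧ (0.4 * Real.pi - 1 < 1) ∧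
    ∀ δ : ℝ, δ ∈ Set.Icc (-(1/4) : ℝ) (1/4) → ∀ n : ℤ,
      |sigmaFn (n + δ) - n| ≤ (0.4 * Real.pi - 1) * |δ| := by
  have hpi3 := Real.pi_gt_three
  have hpi5 := Real.pi_lt_d2
  refine ⟨by nlinarith, by nlinarith, ?_⟩
  rintro δ ⟨hl, hr⟩ n
  have hs : Real.sin (2 * Real.pi * (n + δ)) = Real.sin (2 * Real.pi * δ) := by
    have := Real.sin_add_int_mul_two_pi (2 * Real.pi * δ) n
    rw [← this]; ring_nf
  have key : sigmaFn (n + δ) - n = δ - 0.2 * Real.sin (2 * Real.pi * δ) := by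
    simp only [sigmaFn, hs]; ring
  rw [key]
  rcases le_or_gt 0 δ with h | h
  · rw [abs_of_nonneg h]; exact aux_bound h hr
  · have hodd : Real.sin (2 * Real.pi * δ) = -Real.sin (2 * Real.pi * (-δ)) := by
      rw [show 2 * Real.pi * δ = -(2 * Real.pi * (-δ)) by ring, Real.sin_neg]
    have : |δ - 0.2 * Real.sin (2 * Real.pi * δ)|
        = |(-δ) - 0.2 * Real.sin (2 * Real.pi * (-δ))| := by
      rw [hodd, ← abs_neg]; ring_nf
    rw [this, abs_of_neg h]
    exact aux_bound (by linarith) (by linarith)
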